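/- arXiv:1602.02946 — 2 statements merged into one kernel-verified Lean document; each statement's English description precedes it below -/
import Mathlib

section
/- Let μ be a swap-invariant Borel measure on S¹×S¹ with null slices. Let x₁,x₂,x₃,x₄ ∈ S¹ be pairwise distinct points arranged in strict counterclockwise cyclic order, and assume that the four values μ(L(x₁,x₃)), μ(L(x₄,x₂)), μ(L(x₂,x₃)), μ(L(x₁,x₄)) are all finite. Let E := {x₁} ∪ Arc(x₁,x₂) ∪ {x₂} be the closed arc from x₁ to x₂ and F := {x₃} ∪ Arc(x₃,x₄) ∪ {x₄} the closed arc from x₃ to x₄ (both traversed counterclockwise). Then μ(E×F) = ½ · ( μ(L(x₁,x₃)) + μ(L(x₄,x₂)) − μ(L(x₂,x₃)) − μ(L(x₁,x₄)) ). -/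
set_option maxHeartbeats 1000000


open MeasureTheory Set

noncomputable section

local instance : Fact (0 < 2 * Real.pi) := ⟨by positivity⟩

/-- The representative of a point of the circle `S¹ = ℝ/2πℤ` in the interval `(0, 2π]`. -/
def circleRep (x : AddCircle (2 * Real.pi)) : ℝ :=
  (AddCircle.equivIoc (2 * Real.pi) 0 x : ℝ)

/-- The open arc of points traversed when moving counterclockwise from `a` to `b`
(for `a ≠ b`): those `x` whose angular distance from `a` is smaller than that of `b`. -/
def Arc (a b : AddCircle (2 * Real.pi)) : Set (AddCircle (2 * Real.pi)) :=
  {x | circleRep (x - a) < circleRep (b - a)}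

/-- The ordered linking set `L(a,b) := Arc(a,b) × Arc(b,a) ⊆ S¹ × S¹`. -/
def LinkSet (a b : AddCircle (2 * Real.pi)) :
    Set (AddCircle (2 * Real.pi) × AddCircle (2 * Real.pi)) :=
  (Arc a b) ×ˢ (Arc b a)

local notation "𝕊" => AddCircle (2 * Real.pi)

lemma circleRep_mem (x : 𝕊) : circleRep x ∈ Ioc 0 (2 * Real.pi) := by
  have h := (AddCircle.equivIoc (2 * Real.pi) 0 x).2
  simpa [circleRep] using h

lemma coe_circleRep (x : 𝕊) : ((circleRep x : ℝ) : 𝕊) = x :=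
  (AddCircle.equivIoc (2 * Real.pi) 0).symm_apply_apply x

lemma circleRep_coe {r : ℝ} (h : r ∈ Ioc 0 (2 * Real.pi)) :
    circleRep (r : 𝕊) = r := by
  unfold circleRep
  rw [show (AddCircle.equivIoc (2 * Real.pi) 0) (r : 𝕊)
      = ⟨toIocMod (by positivity : (0:ℝ) < 2 * Real.pi) 0 r, toIocMod_mem_Ioc _ 0 _⟩ from rfl]
  exact (toIocMod_eq_self _).mpr (by simpa using h)

lemma circleRep_zero : circleRep (0 : 𝕊) = 2 * Real.pi := by
  rw [← AddCircle.coe_period]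
  exact circleRep_coe ⟨by positivity, le_refl _⟩

lemma measurable_circleRep : Measurable circleRep :=
  measurable_subtype_coe.comp (AddCircle.measurableEquivIoc (2 * Real.pi) 0).measurable

lemma measurableSet_arc (a b : 𝕊) : MeasurableSet (Arc a b) :=
  (measurable_circleRep.comp (measurable_id.sub measurable_const)) measurableSet_Iio

lemma circleRep_sub_coe {s t : ℝ} (hs : s ∈ Ioc 0 (2 * Real.pi)) (ht : t ∈ Ioc 0 (2 * Real.pi)) :
    circleRep ((s : 𝕊) - (t : 𝕊)) = if t < s then s - t else s - t + 2 * Real.pi := by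
  have hco : ((s : 𝕊) - (t : 𝕊)) = ((s - t : ℝ) : 𝕊) :=
    (AddCircle.coe_sub (p := 2 * Real.pi) s t).symm
  split_ifs with h
  · rw [hco]; exact circleRep_coe ⟨by linarith [ht.1], by linarith [hs.2, ht.1]⟩
  · have h2 : ((s - t + 2 * Real.pi : ℝ) : 𝕊) = ((s - t : ℝ) : 𝕊) := by
      rw [AddCircle.coe_add, AddCircle.coe_period, add_zero]
    rw [hco, ← h2]
    exact circleRep_coe ⟨by linarith [hs.1, ht.2], by linarith [hs.1, ht.2]⟩

lemma mem_Arc_iff (o a b x : 𝕊) :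
    x ∈ Arc a b ↔
      (if circleRep (a - o) < circleRep (b - o)
        then circleRep (a - o) < circleRep (x - o) ∧ circleRep (x - o) < circleRep (b - o)
        else circleRep (a - o) < circleRep (x - o) ∨ circleRep (x - o) < circleRep (b - o)) := by
  obtain ⟨hu1, hu2⟩ := circleRep_mem (a - o)
  obtain ⟨hv1, hv2⟩ := circleRep_mem (b - o)
  obtain ⟨ht1, ht2⟩ := circleRep_mem (x - o)
  have e1 : x - a = ((circleRep (x - o) : ℝ) : 𝕊) - ((circleRep (a - o) : ℝ) : 𝕊) := by
    rw [coe_circleRep, coe_circleRep]; abel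
  have e2 : b - a = ((circleRep (b - o) : ℝ) : 𝕊) - ((circleRep (a - o) : ℝ) : 𝕊) := by
    rw [coe_circleRep, coe_circleRep]; abel
  show circleRep (x - a) < circleRep (b - a) ↔ _
  rw [e1, e2, circleRep_sub_coe (circleRep_mem _) (circleRep_mem _),
    circleRep_sub_coe (circleRep_mem _) (circleRep_mem _)]
  split_ifs with h1 h2 h2
  · exact ⟨fun h3 => ⟨h1, by linarith⟩, fun h3 => by linarith [h3.2]⟩
  · exact ⟨fun _ => Or.inl h1, fun _ => by linarith⟩
  · exact ⟨fun h3 => by exfalso; linarith, fun h3 => absurd h3.1 h1⟩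
  · constructor
    · intro h3; right; linarith
    · rintro (h3 | h3)
      · exact absurd h3 h1
      · linarith

lemma measure_sandwich {α : Type*} [MeasurableSpace α] (μ : Measure α) {U V Z : Set α}
    (h1 : V ⊆ U) (h2 : U ⊆ V ∪ Z) (hZ : μ Z = 0) : μ U = μ V :=
  le_antisymm ((measure_mono h2).trans ((measure_union_le V Z).trans (by rw [hZ, add_zero])))
    (measure_mono h1)

/-- The four-point identity from the proof of Lemma 2.7: for a swap-invariant Borel
measure with null slices on `S¹ × S¹` and four pairwise distinct points in strict
counterclockwise cyclic order, the measure of the product of the closed arcs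
`E = [x₁,x₂]`, `F = [x₃,x₄]` equals
`½ (μ(L(x₁,x₃)) + μ(L(x₄,x₂)) − μ(L(x₂,x₃)) − μ(L(x₁,x₄)))`. -/
theorem four_point_identity
    (μ : Measure (AddCircle (2 * Real.pi) × AddCircle (2 * Real.pi)))
    (hswap : μ.map Prod.swap = μ)
    (hslice : ∀ a : AddCircle (2 * Real.pi),
      μ (({a} : Set (AddCircle (2 * Real.pi))) ×ˢ (univ : Set (AddCircle (2 * Real.pi)))) = 0 ∧
      μ ((univ : Set (AddCircle (2 * Real.pi))) ×ˢ ({a} : Set (AddCircle (2 * Real.pi)))) = 0)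
    (x₁ x₂ x₃ x₄ : AddCircle (2 * Real.pi))
    (h12 : x₁ ≠ x₂) (h13 : x₁ ≠ x₃) (h14 : x₁ ≠ x₄)
    (h23 : x₂ ≠ x₃) (h24 : x₂ ≠ x₄) (h34 : x₃ ≠ x₄)
    (horder : circleRep (x₂ - x₁) < circleRep (x₃ - x₁) ∧
      circleRep (x₃ - x₁) < circleRep (x₄ - x₁))
    (hfin13 : μ (LinkSet x₁ x₃) < ⊤) (hfin42 : μ (LinkSet x₄ x₂) < ⊤)
    (hfin23 : μ (LinkSet x₂ x₃) < ⊤) (hfin14 : μ (LinkSet x₁ x₄) < ⊤) :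
    (μ (({x₁} ∪ Arc x₁ x₂ ∪ {x₂}) ×ˢ ({x₃} ∪ Arc x₃ x₄ ∪ {x₄}))).toReal =
      (1 / 2) * ((μ (LinkSet x₁ x₃)).toReal + (μ (LinkSet x₄ x₂)).toReal
        - (μ (LinkSet x₂ x₃)).toReal - (μ (LinkSet x₁ x₄)).toReal) := by
  obtain ⟨ho23, ho34⟩ := horder
  have ho24 := ho23.trans ho34
  have hm2 := circleRep_mem (x₂ - x₁)
  have hm3 := circleRep_mem (x₃ - x₁)
  have hm4 := circleRep_mem (x₄ - x₁)
  have ht₁ : circleRep (x₁ - x₁) = 2 * Real.pi := by rw [sub_self]; exact circleRep_zero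
  have hpt : ∀ y a : 𝕊, circleRep (y - x₁) = circleRep (a - x₁) → y = a := by
    intro y a h
    have h2 : ((circleRep (y - x₁) : ℝ) : 𝕊) = ((circleRep (a - x₁) : ℝ) : 𝕊) := by rw [h]
    rw [coe_circleRep, coe_circleRep] at h2
    exact sub_left_injective h2
  have h4lt : circleRep (x₄ - x₁) < 2 * Real.pi :=
    lt_of_le_of_ne hm4.2 (fun h => h14 ((hpt x₄ x₁ (by rw [h, ht₁])).symm))
  -- arc characterizations
  have hA : ∀ x : 𝕊, x ∈ Arc x₁ x₂ ↔ circleRep (x - x₁) < circleRep (x₂ - x₁) := by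
    intro x
    rw [mem_Arc_iff x₁ x₁ x₂ x, ht₁, if_neg (not_lt.mpr hm2.2)]
    constructor
    · rintro (h | h)
      · exact absurd h (not_lt.mpr (circleRep_mem (x - x₁)).2)
      · exact h
    · exact Or.inr
  have hB : ∀ x : 𝕊, x ∈ Arc x₂ x₃ ↔
      circleRep (x₂ - x₁) < circleRep (x - x₁) ∧ circleRep (x - x₁) < circleRep (x₃ - x₁) := by
    intro x; rw [mem_Arc_iff x₁ x₂ x₃ x, if_pos ho23]
  have hC : ∀ x : 𝕊, x ∈ Arc x₃ x₄ ↔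
      circleRep (x₃ - x₁) < circleRep (x - x₁) ∧ circleRep (x - x₁) < circleRep (x₄ - x₁) := by
    intro x; rw [mem_Arc_iff x₁ x₃ x₄ x, if_pos ho34]
  have hD : ∀ x : 𝕊, x ∈ Arc x₄ x₁ ↔
      circleRep (x₄ - x₁) < circleRep (x - x₁) ∧ circleRep (x - x₁) < 2 * Real.pi := by
    intro x; rw [mem_Arc_iff x₁ x₄ x₁ x, ht₁, if_pos h4lt]
  have hA13 : ∀ x : 𝕊, x ∈ Arc x₁ x₃ ↔ circleRep (x - x₁) < circleRep (x₃ - x₁) := by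
    intro x
    rw [mem_Arc_iff x₁ x₁ x₃ x, ht₁, if_neg (not_lt.mpr hm3.2)]
    constructor
    · rintro (h | h)
      · exact absurd h (not_lt.mpr (circleRep_mem (x - x₁)).2)
      · exact h
    · exact Or.inr
  have hA31 : ∀ x : 𝕊, x ∈ Arc x₃ x₁ ↔
      circleRep (x₃ - x₁) < circleRep (x - x₁) ∧ circleRep (x - x₁) < 2 * Real.pi := by
    intro x; rw [mem_Arc_iff x₁ x₃ x₁ x, ht₁, if_pos (ho34.trans h4lt)]
  have hA42 : ∀ x : 𝕊, x ∈ Arc x₄ x₂ ↔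
      circleRep (x₄ - x₁) < circleRep (x - x₁) ∨ circleRep (x - x₁) < circleRep (x₂ - x₁) := by
    intro x; rw [mem_Arc_iff x₁ x₄ x₂ x, if_neg (not_lt.mpr ho24.le)]
  have hA24 : ∀ x : 𝕊, x ∈ Arc x₂ x₄ ↔
      circleRep (x₂ - x₁) < circleRep (x - x₁) ∧ circleRep (x - x₁) < circleRep (x₄ - x₁) := by
    intro x; rw [mem_Arc_iff x₁ x₂ x₄ x, if_pos ho24]
  have hA32 : ∀ x : 𝕊, x ∈ Arc x₃ x₂ ↔
      circleRep (x₃ - x₁) < circleRep (x - x₁) ∨ circleRep (x - x₁) < circleRep (x₂ - x₁) := by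
    intro x; rw [mem_Arc_iff x₁ x₃ x₂ x, if_neg (not_lt.mpr ho23.le)]
  have hA14 : ∀ x : 𝕊, x ∈ Arc x₁ x₄ ↔ circleRep (x - x₁) < circleRep (x₄ - x₁) := by
    intro x
    rw [mem_Arc_iff x₁ x₁ x₄ x, ht₁, if_neg (not_lt.mpr hm4.2)]
    constructor
    · rintro (h | h)
      · exact absurd h (not_lt.mpr (circleRep_mem (x - x₁)).2)
      · exact h
    · exact Or.inr
  -- measurability
  have mA := measurableSet_arc x₁ x₂
  have mB := measurableSet_arc x₂ x₃
  have mC := measurableSet_arc x₃ x₄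
  have mD := measurableSet_arc x₄ x₁
  -- disjointness
  have dAB : Disjoint (Arc x₁ x₂) (Arc x₂ x₃) := by
    rw [Set.disjoint_left]; intro y h1 h2
    rw [hA y] at h1; rw [hB y] at h2; linarith [h2.1]
  have dAC : Disjoint (Arc x₁ x₂) (Arc x₃ x₄) := by
    rw [Set.disjoint_left]; intro y h1 h2
    rw [hA y] at h1; rw [hC y] at h2; linarith [h2.1]
  have dBC : Disjoint (Arc x₂ x₃) (Arc x₃ x₄) := by
    rw [Set.disjoint_left]; intro y h1 h2
    rw [hB y] at h1; rw [hC y] at h2; linarith [h1.2, h2.1]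
  have dCD : Disjoint (Arc x₃ x₄) (Arc x₄ x₁) := by
    rw [Set.disjoint_left]; intro y h1 h2
    rw [hC y] at h1; rw [hD y] at h2; linarith [h1.2, h2.1]
  have dDA : Disjoint (Arc x₄ x₁) (Arc x₁ x₂) := by
    rw [Set.disjoint_left]; intro y h1 h2
    rw [hD y] at h1; rw [hA y] at h2; linarith [h1.1]
  have dCA : Disjoint (Arc x₃ x₄) (Arc x₁ x₂) := dAC.symm
  -- swap invariance for products
  have hswap' : ∀ S T : Set 𝕊, MeasurableSet S → MeasurableSet T → μ (S ×ˢ T) = μ (T ×ˢ S) := by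
    intro S T hS hT
    conv_lhs => rw [← hswap]
    rw [Measure.map_apply measurable_swap (hS.prod hT), Set.preimage_swap_prod]
  -- E × F identity
  have hEF : μ (({x₁} ∪ Arc x₁ x₂ ∪ {x₂}) ×ˢ ({x₃} ∪ Arc x₃ x₄ ∪ {x₄}))
      = μ (Arc x₁ x₂ ×ˢ Arc x₃ x₄) := by
    refine measure_sandwich μ ?_ ?_ (Z :=
      (({x₁} : Set 𝕊) ×ˢ (univ : Set 𝕊) ∪ ({x₂} : Set 𝕊) ×ˢ (univ : Set 𝕊))
        ∪ ((univ : Set 𝕊) ×ˢ ({x₃} : Set 𝕊) ∪ (univ : Set 𝕊) ×ˢ ({x₄} : Set 𝕊)))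
      (measure_union_null (measure_union_null (hslice x₁).1 (hslice x₂).1)
        (measure_union_null (hslice x₃).2 (hslice x₄).2))
    · rintro ⟨y, z⟩ ⟨hy, hz⟩
      exact ⟨Or.inl (Or.inr hy), Or.inl (Or.inr hz)⟩
    · rintro ⟨y, z⟩ ⟨hy, hz⟩
      rcases hy with (hy | hy) | hy
      · exact Or.inr (Or.inl (Or.inl ⟨hy, mem_univ z⟩))
      · rcases hz with (hz | hz) | hz
        · exact Or.inr (Or.inr (Or.inl ⟨mem_univ y, hz⟩))
        · exact Or.inl ⟨hy, hz⟩
        · exact Or.inr (Or.inr (Or.inr ⟨mem_univ y, hz⟩))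
      · exact Or.inr (Or.inl (Or.inr ⟨hy, mem_univ z⟩))
  -- L(x₁,x₃)
  have e13 : μ (LinkSet x₁ x₃)
      = μ (Arc x₁ x₂ ×ˢ Arc x₃ x₄) + μ (Arc x₁ x₂ ×ˢ Arc x₄ x₁)
        + μ (Arc x₂ x₃ ×ˢ Arc x₃ x₄) + μ (Arc x₂ x₃ ×ˢ Arc x₄ x₁) := by
    have hsand : μ (LinkSet x₁ x₃)
        = μ ((Arc x₁ x₂ ∪ Arc x₂ x₃) ×ˢ (Arc x₃ x₄ ∪ Arc x₄ x₁)) := by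
      refine measure_sandwich μ ?_ ?_ (Z :=
        (({x₂} : Set 𝕊) ×ˢ (univ : Set 𝕊) ∪ (univ : Set 𝕊) ×ˢ ({x₄} : Set 𝕊)))
        (measure_union_null (hslice x₂).1 (hslice x₄).2)
      · rintro ⟨y, z⟩ ⟨hy, hz⟩
        constructor
        · show y ∈ Arc x₁ x₃
          rw [hA13 y]
          rcases hy with h | h
          · rw [hA y] at h; linarith
          · rw [hB y] at h; exact h.2
        · show z ∈ Arc x₃ x₁
          rw [hA31 z]
          rcases hz with h | h
          · rw [hC z] at h; exact ⟨h.1, by linarith⟩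
          · rw [hD z] at h; exact ⟨ho34.trans h.1, h.2⟩
      · rintro ⟨y, z⟩ ⟨hy, hz⟩
        rw [hA13 y] at hy
        rw [hA31 z] at hz
        rcases eq_or_ne y x₂ with rfl | hy2
        · exact Or.inr (Or.inl ⟨rfl, mem_univ z⟩)
        rcases eq_or_ne z x₄ with rfl | hz4
        · exact Or.inr (Or.inr ⟨mem_univ y, rfl⟩)
        left
        constructor
        · rcases lt_or_ge (circleRep (y - x₁)) (circleRep (x₂ - x₁)) with h | h
          · exact Or.inl ((hA y).mpr h)
          · have h' : circleRep (x₂ - x₁) < circleRep (y - x₁) :=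
              lt_of_le_of_ne h (fun hh => hy2 (hpt y x₂ hh.symm))
            exact Or.inr ((hB y).mpr ⟨h', hy⟩)
        · rcases lt_or_ge (circleRep (z - x₁)) (circleRep (x₄ - x₁)) with h | h
          · exact Or.inl ((hC z).mpr ⟨hz.1, h⟩)
          · have h' : circleRep (x₄ - x₁) < circleRep (z - x₁) :=
              lt_of_le_of_ne h (fun hh => hz4 (hpt z x₄ hh.symm))
            exact Or.inr ((hD z).mpr ⟨h', hz.2⟩)
    rw [hsand, union_prod, prod_union, prod_union,
      measure_union
        (((disjoint_prod.mpr (Or.inl dAB)).union_right (disjoint_prod.mpr (Or.inl dAB))).union_left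
          ((disjoint_prod.mpr (Or.inl dAB)).union_right (disjoint_prod.mpr (Or.inl dAB))))
        ((mB.prod mC).union (mB.prod mD)),
      measure_union (disjoint_prod.mpr (Or.inr dCD)) (mA.prod mD),
      measure_union (disjoint_prod.mpr (Or.inr dCD)) (mB.prod mD)]
    ring
  -- L(x₄,x₂)
  have e42 : μ (LinkSet x₄ x₂)
      = μ (Arc x₄ x₁ ×ˢ Arc x₂ x₃) + μ (Arc x₄ x₁ ×ˢ Arc x₃ x₄)
        + μ (Arc x₁ x₂ ×ˢ Arc x₂ x₃) + μ (Arc x₁ x₂ ×ˢ Arc x₃ x₄) := by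
    have hsand : μ (LinkSet x₄ x₂)
        = μ ((Arc x₄ x₁ ∪ Arc x₁ x₂) ×ˢ (Arc x₂ x₃ ∪ Arc x₃ x₄)) := by
      refine measure_sandwich μ ?_ ?_ (Z :=
        (({x₁} : Set 𝕊) ×ˢ (univ : Set 𝕊) ∪ (univ : Set 𝕊) ×ˢ ({x₃} : Set 𝕊)))
        (measure_union_null (hslice x₁).1 (hslice x₃).2)
      · rintro ⟨y, z⟩ ⟨hy, hz⟩
        constructor
        · show y ∈ Arc x₄ x₂
          rw [hA42 y]
          rcases hy with h | h
          · rw [hD y] at h; exact Or.inl h.1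
          · rw [hA y] at h; exact Or.inr h
        · show z ∈ Arc x₂ x₄
          rw [hA24 z]
          rcases hz with h | h
          · rw [hB z] at h; exact ⟨h.1, h.2.trans ho34⟩
          · rw [hC z] at h; exact ⟨ho23.trans h.1, h.2⟩
      · rintro ⟨y, z⟩ ⟨hy, hz⟩
        rw [hA42 y] at hy
        rw [hA24 z] at hz
        rcases eq_or_ne y x₁ with rfl | hy1
        · exact Or.inr (Or.inl ⟨rfl, mem_univ z⟩)
        rcases eq_or_ne z x₃ with rfl | hz3
        · exact Or.inr (Or.inr ⟨mem_univ y, rfl⟩)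
        left
        constructor
        · rcases hy with h | h
          · have h' : circleRep (y - x₁) < 2 * Real.pi :=
              lt_of_le_of_ne (circleRep_mem (y - x₁)).2
                (fun hh => hy1 (hpt y x₁ (by rw [hh, ht₁])))
            exact Or.inl ((hD y).mpr ⟨h, h'⟩)
          · exact Or.inr ((hA y).mpr h)
        · rcases lt_or_ge (circleRep (z - x₁)) (circleRep (x₃ - x₁)) with h | h
          · exact Or.inl ((hB z).mpr ⟨hz.1, h⟩)
          · have h' : circleRep (x₃ - x₁) < circleRep (z - x₁) :=
              lt_of_le_of_ne h (fun hh => hz3 (hpt z x₃ hh.symm))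
            exact Or.inr ((hC z).mpr ⟨h', hz.2⟩)
    rw [hsand, union_prod, prod_union, prod_union,
      measure_union
        (((disjoint_prod.mpr (Or.inl dDA)).union_right (disjoint_prod.mpr (Or.inl dDA))).union_left
          ((disjoint_prod.mpr (Or.inl dDA)).union_right (disjoint_prod.mpr (Or.inl dDA))))
        ((mA.prod mB).union (mA.prod mC)),
      measure_union (disjoint_prod.mpr (Or.inr dBC)) (mD.prod mC),
      measure_union (disjoint_prod.mpr (Or.inr dBC)) (mA.prod mC)]
    ring
  -- L(x₂,x₃)
  have e23 : μ (LinkSet x₂ x₃)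
      = μ (Arc x₂ x₃ ×ˢ Arc x₃ x₄) + μ (Arc x₂ x₃ ×ˢ Arc x₄ x₁)
        + μ (Arc x₂ x₃ ×ˢ Arc x₁ x₂) := by
    have hsand : μ (LinkSet x₂ x₃)
        = μ (Arc x₂ x₃ ×ˢ ((Arc x₃ x₄ ∪ Arc x₄ x₁) ∪ Arc x₁ x₂)) := by
      refine measure_sandwich μ ?_ ?_ (Z :=
        ((univ : Set 𝕊) ×ˢ ({x₄} : Set 𝕊) ∪ (univ : Set 𝕊) ×ˢ ({x₁} : Set 𝕊)))
        (measure_union_null (hslice x₄).2 (hslice x₁).2)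
      · rintro ⟨y, z⟩ ⟨hy, hz⟩
        refine ⟨hy, ?_⟩
        show z ∈ Arc x₃ x₂
        rw [hA32 z]
        rcases hz with (h | h) | h
        · rw [hC z] at h; exact Or.inl h.1
        · rw [hD z] at h; exact Or.inl (ho34.trans h.1)
        · rw [hA z] at h; exact Or.inr h
      · rintro ⟨y, z⟩ ⟨hy, hz⟩
        rw [hA32 z] at hz
        rcases hz with h | h
        · rcases eq_or_ne z x₄ with rfl | hz4
          · exact Or.inr (Or.inl ⟨mem_univ y, rfl⟩)
          rcases eq_or_ne z x₁ with rfl | hz1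
          · exact Or.inr (Or.inr ⟨mem_univ y, rfl⟩)
          left
          refine ⟨hy, ?_⟩
          rcases lt_or_ge (circleRep (z - x₁)) (circleRep (x₄ - x₁)) with h' | h'
          · exact Or.inl (Or.inl ((hC z).mpr ⟨h, h'⟩))
          · have h'' : circleRep (x₄ - x₁) < circleRep (z - x₁) :=
              lt_of_le_of_ne h' (fun hh => hz4 (hpt z x₄ hh.symm))
            have h''' : circleRep (z - x₁) < 2 * Real.pi :=
              lt_of_le_of_ne (circleRep_mem (z - x₁)).2
                (fun hh => hz1 (hpt z x₁ (by rw [hh, ht₁])))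
            exact Or.inl (Or.inr ((hD z).mpr ⟨h'', h'''⟩))
        · exact Or.inl ⟨hy, Or.inr ((hA z).mpr h)⟩
    rw [hsand, prod_union, prod_union,
      measure_union
        (((disjoint_prod.mpr (Or.inr dCA)).union_left
          (disjoint_prod.mpr (Or.inr dDA)))) (mB.prod mA),
      measure_union (disjoint_prod.mpr (Or.inr dCD)) (mB.prod mD)]
  -- L(x₁,x₄)
  have e14 : μ (LinkSet x₁ x₄)
      = μ (Arc x₁ x₂ ×ˢ Arc x₄ x₁) + μ (Arc x₂ x₃ ×ˢ Arc x₄ x₁)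
        + μ (Arc x₃ x₄ ×ˢ Arc x₄ x₁) := by
    have hsand : μ (LinkSet x₁ x₄)
        = μ (((Arc x₁ x₂ ∪ Arc x₂ x₃) ∪ Arc x₃ x₄) ×ˢ Arc x₄ x₁) := by
      refine measure_sandwich μ ?_ ?_ (Z :=
        (({x₂} : Set 𝕊) ×ˢ (univ : Set 𝕊) ∪ ({x₃} : Set 𝕊) ×ˢ (univ : Set 𝕊)))
        (measure_union_null (hslice x₂).1 (hslice x₃).1)
      · rintro ⟨y, z⟩ ⟨hy, hz⟩
        refine ⟨?_, hz⟩
        show y ∈ Arc x₁ x₄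
        rw [hA14 y]
        rcases hy with (h | h) | h
        · rw [hA y] at h; linarith
        · rw [hB y] at h; linarith [h.2]
        · rw [hC y] at h; exact h.2
      · rintro ⟨y, z⟩ ⟨hy, hz⟩
        rw [hA14 y] at hy
        rcases eq_or_ne y x₂ with rfl | hy2
        · exact Or.inr (Or.inl ⟨rfl, mem_univ z⟩)
        rcases eq_or_ne y x₃ with rfl | hy3
        · exact Or.inr (Or.inr ⟨rfl, mem_univ z⟩)
        left
        refine ⟨?_, hz⟩
        rcases lt_or_ge (circleRep (y - x₁)) (circleRep (x₂ - x₁)) with h | h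
        · exact Or.inl (Or.inl ((hA y).mpr h))
        have h' : circleRep (x₂ - x₁) < circleRep (y - x₁) :=
          lt_of_le_of_ne h (fun hh => hy2 (hpt y x₂ hh.symm))
        rcases lt_or_ge (circleRep (y - x₁)) (circleRep (x₃ - x₁)) with h'' | h''
        · exact Or.inl (Or.inr ((hB y).mpr ⟨h', h''⟩))
        have h''' : circleRep (x₃ - x₁) < circleRep (y - x₁) :=
          lt_of_le_of_ne h'' (fun hh => hy3 (hpt y x₃ hh.symm))
        exact Or.inr ((hC y).mpr ⟨h''', hy⟩)
    rw [hsand, union_prod, union_prod,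
      measure_union
        (((disjoint_prod.mpr (Or.inl dAC)).union_left
          (disjoint_prod.mpr (Or.inl dBC)))) (mC.prod mD),
      measure_union (disjoint_prod.mpr (Or.inl dAB)) (mB.prod mD)]
  -- apply swap invariance
  rw [hswap' (Arc x₄ x₁) (Arc x₂ x₃) mD mB, hswap' (Arc x₄ x₁) (Arc x₃ x₄) mD mC] at e42
  rw [hswap' (Arc x₂ x₃) (Arc x₁ x₂) mB mA] at e23
  -- finiteness of the pieces
  have f13 := e13 ▸ hfin13
  have f42 := e42 ▸ hfin42
  have u1 := ENNReal.add_lt_top.mp f13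
  have u2 := ENNReal.add_lt_top.mp u1.1
  have u3 := ENNReal.add_lt_top.mp u2.1
  have v1 := ENNReal.add_lt_top.mp f42
  have v2 := ENNReal.add_lt_top.mp v1.1
  have v3 := ENNReal.add_lt_top.mp v2.1
  have fac : μ (Arc x₁ x₂ ×ˢ Arc x₃ x₄) ≠ ⊤ := u3.1.ne
  have fad : μ (Arc x₁ x₂ ×ˢ Arc x₄ x₁) ≠ ⊤ := u3.2.ne
  have fbc : μ (Arc x₂ x₃ ×ˢ Arc x₃ x₄) ≠ ⊤ := u2.2.ne
  have fbd : μ (Arc x₂ x₃ ×ˢ Arc x₄ x₁) ≠ ⊤ := u1.2.ne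
  have fcd : μ (Arc x₃ x₄ ×ˢ Arc x₄ x₁) ≠ ⊤ := v3.2.ne
  have fab : μ (Arc x₁ x₂ ×ˢ Arc x₂ x₃) ≠ ⊤ := v2.2.ne
  -- toReal arithmetic
  have tr4 : ∀ {a b c d : ENNReal}, a ≠ ⊤ → b ≠ ⊤ → c ≠ ⊤ → d ≠ ⊤ →
      (a + b + c + d).toReal = a.toReal + b.toReal + c.toReal + d.toReal := by
    intro a b c d ha hb hc hd
    rw [ENNReal.toReal_add (by simp [ENNReal.add_ne_top, ha, hb, hc]) hd,
        ENNReal.toReal_add (by simp [ENNReal.add_ne_top, ha, hb]) hc,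
        ENNReal.toReal_add ha hb]
  have tr3 : ∀ {a b c : ENNReal}, a ≠ ⊤ → b ≠ ⊤ → c ≠ ⊤ →
      (a + b + c).toReal = a.toReal + b.toReal + c.toReal := by
    intro a b c ha hb hc
    rw [ENNReal.toReal_add (by simp [ENNReal.add_ne_top, ha, hb]) hc,
        ENNReal.toReal_add ha hb]
  rw [hEF, e13, e42, e23, e14, tr4 fac fad fbc fbd, tr4 fbd fcd fab fac,
    tr3 fbc fbd fab, tr3 fad fbd fcd]
  ring
end
end

section
/- Let Θ : [0,π] → [0,π] be a continuous function satisfying: (i) Θ(0) = 0 and Θ(π) = π; (ii) Θ(π−θ) = π − Θ(θ) for all θ ∈ [0,π]; (iii) Θ(θ₁+θ₂) ≥ Θ(θ₁) + Θ(θ₂) for all θ₁, θ₂ ∈ [0,π] with θ₁+θ₂ ∈ [0,π]; and (iv) for every continuous convex function f : [0,π] → ℝ, ∫₀^π f(Θ(θ)) sin(θ) dθ ≤ ∫₀^π f(θ) sin(θ) dθ. Then Θ(θ) = θ for all θ ∈ [0,π]. -/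
open MeasureTheory Set Real

private lemma zero_of_nonneg_of_integral_zero' (g : ℝ → ℝ)
    (hc : ContinuousOn g (Set.Icc 0 π))
    (hnn : ∀ x ∈ Set.Icc (0:ℝ) π, 0 ≤ g x)
    (hint : (∫ x in (0:ℝ)..π, g x) = 0) :
    ∀ x ∈ Set.Icc (0:ℝ) π, g x = 0 := by
  intro x₀ hx₀
  by_contra hne
  have hpos : 0 < g x₀ := lt_of_le_of_ne (hnn x₀ hx₀) (Ne.symm hne)
  have h_ev : ∀ᶠ y in nhdsWithin x₀ (Set.Icc 0 π), g x₀ / 2 < g y :=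
    (hc x₀ hx₀).eventually (eventually_gt_nhds (half_lt_self hpos))
  rw [Filter.Eventually, Metric.mem_nhdsWithin_iff] at h_ev
  obtain ⟨δ, hδ, hball⟩ := h_ev
  set u := max 0 (x₀ - δ/2) with hu
  set v := min π (x₀ + δ/2) with hv
  have hx01 := hx₀.1
  have hx02 := hx₀.2
  have huv : u < v := by
    rcases lt_or_ge x₀ π with h | h
    · apply max_lt <;> [skip; skip] <;>
      · apply lt_min <;> [linarith; linarith]
    · have hxpi : x₀ = π := le_antisymm hx02 h
      have : 0 < π := pi_pos
      apply max_lt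
      · apply lt_min <;> linarith
      · apply lt_min <;> linarith
  have hu0 : 0 ≤ u := le_max_left _ _
  have hvpi : v ≤ π := min_le_left _ _
  have hsub : Set.Icc u v ⊆ Set.Icc (0:ℝ) π :=
    Set.Icc_subset_Icc hu0 hvpi
  have hkey : ∀ y ∈ Set.Icc u v, g x₀ / 2 ≤ g y := by
    intro y hy
    have hd : dist y x₀ < δ := by
      rw [Real.dist_eq, abs_lt]
      have h1 : x₀ - δ/2 ≤ u := le_max_right _ _
      have h2 : v ≤ x₀ + δ/2 := min_le_right _ _
      constructor <;> [linarith [hy.1]; linarith [hy.2]]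
    exact (hball ⟨Metric.mem_ball.2 hd, hsub hy⟩).le
  have hgi : IntervalIntegrable g volume u v := by
    apply ContinuousOn.intervalIntegrable
    rw [Set.uIcc_of_le huv.le]
    exact hc.mono hsub
  have h1 : (∫ x in u..v, g x) ≤ ∫ x in (0:ℝ)..π, g x := by
    apply intervalIntegral.integral_mono_interval hu0 huv.le hvpi
    · filter_upwards [ae_restrict_mem measurableSet_Ioc] with x hx
      exact hnn x ⟨hx.1.le, hx.2⟩
    · apply ContinuousOn.intervalIntegrable
      rw [Set.uIcc_of_le pi_pos.le]
      exact hc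
  have h2 : g x₀ * (v - u) / 2 ≤ ∫ x in u..v, g x := by
    have := intervalIntegral.integral_mono_on huv.le
      (intervalIntegrable_const (c := g x₀ / 2)) hgi hkey
    simpa [mul_comm] using this
  have h3 : (0:ℝ) < g x₀ * (v - u) / 2 := by
    have := sub_pos.2 huv
    positivity
  rw [hint] at h1
  linarith


/-- Otal's average-angle rigidity lemma (Lemma 8 of Otal's paper), used to conclude the
proof of Theorem 2: a continuous function `Θ : [0,π] → [0,π]` with `Θ(0) = 0`, `Θ(π) = π`,
satisfying the symmetry `Θ(π−θ) = π − Θ(θ)`, the super-additivity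
`Θ(θ₁+θ₂) ≥ Θ(θ₁) + Θ(θ₂)`, and such that
`∫₀^π f(Θ(θ)) sin θ dθ ≤ ∫₀^π f(θ) sin θ dθ` for every continuous convex
`f : [0,π] → ℝ`, is the identity. -/
theorem average_angle_rigidity (Θ : ℝ → ℝ)
    (hcont : ContinuousOn Θ (Set.Icc 0 π))
    (hmaps : Set.MapsTo Θ (Set.Icc 0 π) (Set.Icc 0 π))
    (h0 : Θ 0 = 0) (hpi : Θ π = π)
    (hsym : ∀ θ ∈ Set.Icc (0 : ℝ) π, Θ (π - θ) = π - Θ θ)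
    (hsuper : ∀ θ₁ ∈ Set.Icc (0 : ℝ) π, ∀ θ₂ ∈ Set.Icc (0 : ℝ) π,
      θ₁ + θ₂ ∈ Set.Icc (0 : ℝ) π → Θ θ₁ + Θ θ₂ ≤ Θ (θ₁ + θ₂))
    (hjensen : ∀ f : ℝ → ℝ, ContinuousOn f (Set.Icc 0 π) → ConvexOn ℝ (Set.Icc 0 π) f →
      ∫ θ in (0 : ℝ)..π, f (Θ θ) * Real.sin θ ≤ ∫ θ in (0 : ℝ)..π, f θ * Real.sin θ) :
    ∀ θ ∈ Set.Icc (0 : ℝ) π, Θ θ = θ := by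
  have hpi0 : (0:ℝ) ≤ π := pi_pos.le
  have huI : Set.uIcc (0:ℝ) π = Set.Icc 0 π := Set.uIcc_of_le hpi0
  have hInt : ∀ {f : ℝ → ℝ}, ContinuousOn f (Set.Icc 0 π) →
      IntervalIntegrable f volume 0 π := by
    intro f hf
    apply ContinuousOn.intervalIntegrable
    rwa [huI]
  have hcosΘ : ContinuousOn (fun θ => cos (Θ θ)) (Set.Icc 0 π) :=
    Real.continuous_cos.comp_continuousOn hcont
  have hsinΘ : ContinuousOn (fun θ => sin (Θ θ)) (Set.Icc 0 π) :=
    Real.continuous_sin.comp_continuousOn hcont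
  have hip : IntervalIntegrable (fun θ => sin (Θ θ) * sin θ) volume 0 π :=
    hInt (hsinΘ.mul Real.continuous_sin.continuousOn)
  have hiK : IntervalIntegrable (fun θ => cos (Θ θ) * cos θ) volume 0 π :=
    hInt (hcosΘ.mul Real.continuous_cos.continuousOn)
  have hiq : IntervalIntegrable (fun θ => cos (Θ θ) * sin θ) volume 0 π :=
    hInt (hcosΘ.mul Real.continuous_sin.continuousOn)
  set p := ∫ θ in (0:ℝ)..π, sin (Θ θ) * sin θ with hp_def
  set K := ∫ θ in (0:ℝ)..π, cos (Θ θ) * cos θ with hK_def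
  -- Step 1 : ∫ cos (Θ θ) sin θ = 0
  have hq0 : (∫ θ in (0:ℝ)..π, cos (Θ θ) * sin θ) = 0 := by
    have h1 : (∫ x in (0:ℝ)..π, cos (Θ (π - x)) * sin (π - x)) =
        ∫ θ in (0:ℝ)..π, cos (Θ θ) * sin θ := by
      have h := intervalIntegral.integral_comp_sub_left
        (a := (0:ℝ)) (b := π) (fun x => cos (Θ x) * sin x) π
      simpa using h
    have h2 : (∫ x in (0:ℝ)..π, cos (Θ (π - x)) * sin (π - x)) =
        ∫ x in (0:ℝ)..π, -(cos (Θ x) * sin x) := by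
      apply intervalIntegral.integral_congr
      rw [huI]
      intro x hx
      simp only
      rw [hsym x hx, Real.cos_pi_sub, Real.sin_pi_sub]
      ring
    rw [h2, intervalIntegral.integral_neg] at h1
    linarith
  -- Step 2 : value of A(a)
  have hA : ∀ a : ℝ, (∫ c in (0:ℝ)..π, cos (Θ c) * sin (c - a)) = -(K * sin a) := by
    intro a
    have h1 : EqOn (fun c => cos (Θ c) * sin (c - a))
        (fun c => (cos (Θ c) * sin c) * cos a - (cos (Θ c) * cos c) * sin a)
        (Set.uIcc (0:ℝ) π) := by
      intro c _
      simp only [Real.sin_sub]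
      ring
    rw [intervalIntegral.integral_congr h1,
      intervalIntegral.integral_sub (hiq.mul_const _) (hiK.mul_const _),
      intervalIntegral.integral_mul_const, intervalIntegral.integral_mul_const,
      hq0, ← hK_def]
    ring
  -- Step 3 : value of B(a)
  have hB : ∀ a : ℝ, (∫ b in (0:ℝ)..π, cos (Θ a + Θ b) * sin b) = -(p * sin (Θ a)) := by
    intro a
    have h1 : EqOn (fun b => cos (Θ a + Θ b) * sin b)
        (fun b => cos (Θ a) * (cos (Θ b) * sin b) - sin (Θ a) * (sin (Θ b) * sin b))
        (Set.uIcc (0:ℝ) π) := by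
      intro b _
      simp only [Real.cos_add]
      ring
    rw [intervalIntegral.integral_congr h1,
      intervalIntegral.integral_sub (hiq.const_mul _) (hip.const_mul _),
      intervalIntegral.integral_const_mul, intervalIntegral.integral_const_mul,
      hq0, ← hp_def]
    ring
  -- Step 4 : key inequality
  have hkey : ∀ a ∈ Set.Icc (0:ℝ) π, -(K * sin a) ≤ -(p * sin (Θ a)) := by
    intro a ha
    rw [← hA a, ← hB a]
    obtain ⟨ha0, haπ⟩ := ha
    have hπa0 : (0:ℝ) ≤ π - a := by linarith
    -- continuity / integrability facts
    have hmaps1 : MapsTo (fun b => a + b) (Set.Icc (0:ℝ) (π - a)) (Set.Icc (0:ℝ) π) := by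
      intro b hb
      simp only [Set.mem_Icc] at hb ⊢
      constructor <;> linarith
    have hmaps2 : MapsTo (fun b => a + b - π) (Set.Icc (π - a) π) (Set.Icc (0:ℝ) π) := by
      intro b hb
      simp only [Set.mem_Icc] at hb ⊢
      constructor <;> linarith
    have hc1 : ContinuousOn (fun b => cos (Θ (a + b)) * sin b) (Set.Icc (0:ℝ) (π - a)) := by
      apply ContinuousOn.mul _ Real.continuous_sin.continuousOn
      exact Real.continuous_cos.comp_continuousOn
        (hcont.comp (continuous_const.add continuous_id).continuousOn hmaps1)
    have hc2 : ContinuousOn (fun b => -cos (Θ (a + b - π)) * sin b) (Set.Icc (π - a) π) := by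
      apply ContinuousOn.mul _ Real.continuous_sin.continuousOn
      apply ContinuousOn.neg
      exact Real.continuous_cos.comp_continuousOn
        (hcont.comp ((continuous_const.add continuous_id).sub continuous_const).continuousOn hmaps2)
    have hcB : ContinuousOn (fun b => cos (Θ a + Θ b) * sin b) (Set.Icc (0:ℝ) π) := by
      apply ContinuousOn.mul _ Real.continuous_sin.continuousOn
      exact Real.continuous_cos.comp_continuousOn (continuousOn_const.add hcont)
    have hi1 : IntervalIntegrable (fun b => cos (Θ (a + b)) * sin b) volume 0 (π - a) := by
      apply ContinuousOn.intervalIntegrable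
      rwa [Set.uIcc_of_le hπa0]
    have hi2 : IntervalIntegrable (fun b => -cos (Θ (a + b - π)) * sin b) volume (π - a) π := by
      apply ContinuousOn.intervalIntegrable
      rwa [Set.uIcc_of_le (by linarith : π - a ≤ π)]
    have hiB1 : IntervalIntegrable (fun b => cos (Θ a + Θ b) * sin b) volume 0 (π - a) := by
      apply ContinuousOn.intervalIntegrable
      rw [Set.uIcc_of_le hπa0]
      exact hcB.mono (Set.Icc_subset_Icc le_rfl (by linarith))
    have hiB2 : IntervalIntegrable (fun b => cos (Θ a + Θ b) * sin b) volume (π - a) π := by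
      apply ContinuousOn.intervalIntegrable
      rw [Set.uIcc_of_le (by linarith : π - a ≤ π)]
      exact hcB.mono (Set.Icc_subset_Icc (by linarith) le_rfl)
    -- substitution identities
    have E1 : (∫ c in a..π, cos (Θ c) * sin (c - a)) =
        ∫ b in (0:ℝ)..(π - a), cos (Θ (a + b)) * sin b := by
      have h := intervalIntegral.integral_comp_add_left
        (a := (0:ℝ)) (b := π - a) (fun c => cos (Θ c) * sin (c - a)) a
      have e1 : a + (π - a) = π := by ring
      rw [add_zero, e1] at h
      rw [← h]
      apply intervalIntegral.integral_congr
      intro b _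
      simp only
      rw [add_sub_cancel_left]
    have E2 : (∫ c in (0:ℝ)..a, cos (Θ c) * sin (c - a)) =
        ∫ b in (π - a)..π, -cos (Θ (a + b - π)) * sin b := by
      have h := intervalIntegral.integral_comp_add_right
        (a := π - a) (b := π) (fun c => -cos (Θ c) * sin (c + (π - a))) (a - π)
      have e1 : π - a + (a - π) = 0 := by ring
      have e2 : π + (a - π) = a := by ring
      rw [e1, e2] at h
      have h2 : (∫ b in (π - a)..π, -cos (Θ (a + b - π)) * sin b) =
          ∫ x in (π - a)..π, (fun c => -cos (Θ c) * sin (c + (π - a))) (x + (a - π)) := by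
        apply intervalIntegral.integral_congr
        intro b _
        simp only
        have e3 : b + (a - π) = a + b - π := by ring
        have e4 : a + b - π + (π - a) = b := by ring
        rw [e3, e4]
      have h3 : (∫ c in (0:ℝ)..a, (fun c => -cos (Θ c) * sin (c + (π - a))) c) =
          ∫ c in (0:ℝ)..a, cos (Θ c) * sin (c - a) := by
        apply intervalIntegral.integral_congr
        intro c _
        simp only
        have e5 : c + (π - a) = (c - a) + π := by ring
        rw [e5, Real.sin_add_pi]
        ring
      rw [h2, h, h3]
    -- pointwise inequalities
    have I1 : (∫ b in (0:ℝ)..(π - a), cos (Θ (a + b)) * sin b) ≤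
        ∫ b in (0:ℝ)..(π - a), cos (Θ a + Θ b) * sin b := by
      apply intervalIntegral.integral_mono_on hπa0 hi1 hiB1
      intro b hb
      have hb0 : (0:ℝ) ≤ b := hb.1
      have hbπ : b ≤ π := by linarith [hb.2]
      have hmem : a + b ∈ Set.Icc (0:ℝ) π := ⟨by linarith, by linarith [hb.2]⟩
      have hsup := hsuper a ⟨ha0, haπ⟩ b ⟨hb0, hbπ⟩ hmem
      have hcos := Real.cos_le_cos_of_nonneg_of_le_pi
        (add_nonneg (hmaps ⟨ha0, haπ⟩).1 (hmaps ⟨hb0, hbπ⟩).1)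
        (hmaps hmem).2 hsup
      exact mul_le_mul_of_nonneg_right hcos (Real.sin_nonneg_of_nonneg_of_le_pi hb0 hbπ)
    have I2 : (∫ b in (π - a)..π, -cos (Θ (a + b - π)) * sin b) ≤
        ∫ b in (π - a)..π, cos (Θ a + Θ b) * sin b := by
      apply intervalIntegral.integral_mono_on (by linarith : π - a ≤ π) hi2 hiB2
      intro b hb
      have hb0 : (0:ℝ) ≤ b := by linarith [hb.1]
      have hbπ : b ≤ π := hb.2
      have ht0 : (0:ℝ) ≤ a + b - π := by linarith [hb.1]
      have htπ : a + b - π ≤ π := by linarith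
      have htmem : a + b - π ∈ Set.Icc (0:ℝ) π := ⟨ht0, htπ⟩
      have hπt : π - (a + b - π) ∈ Set.Icc (0:ℝ) π := ⟨by linarith, by linarith⟩
      -- -cos (Θ t) = cos (Θ (π - t))
      have st1 : -cos (Θ (a + b - π)) = cos (Θ (π - (a + b - π))) := by
        rw [hsym _ htmem, Real.cos_pi_sub]
      -- superadditivity at π - a, π - b
      have hmemsum : (π - a) + (π - b) ∈ Set.Icc (0:ℝ) π := ⟨by linarith, by linarith⟩
      have hsup := hsuper (π - a) ⟨by linarith, by linarith⟩ (π - b)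
        ⟨by linarith, by linarith⟩ hmemsum
      rw [hsym a ⟨ha0, haπ⟩, hsym b ⟨hb0, hbπ⟩] at hsup
      have esum : (π - a) + (π - b) = π - (a + b - π) := by ring
      rw [esum] at hsup
      have hcos := Real.cos_le_cos_of_nonneg_of_le_pi
        (by
          have h1 := (hmaps ⟨ha0, haπ⟩).2
          have h2 := (hmaps ⟨hb0, hbπ⟩).2
          linarith)
        (hmaps hπt).2 hsup
      have st2 : cos (π - Θ a + (π - Θ b)) = cos (Θ a + Θ b) := by
        have e : π - Θ a + (π - Θ b) = 2 * π - (Θ a + Θ b) := by ring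
        rw [e, Real.cos_two_pi_sub]
      have hfinal : -cos (Θ (a + b - π)) ≤ cos (Θ a + Θ b) := by
        rw [st1, ← st2]
        exact hcos
      exact mul_le_mul_of_nonneg_right hfinal (Real.sin_nonneg_of_nonneg_of_le_pi hb0 hbπ)
    -- assemble
    have hiA1 : IntervalIntegrable (fun c => cos (Θ c) * sin (c - a)) volume 0 a := by
      apply ContinuousOn.intervalIntegrable
      rw [Set.uIcc_of_le ha0]
      apply ContinuousOn.mul
      · exact hcosΘ.mono (Set.Icc_subset_Icc le_rfl haπ)
      · exact (Real.continuous_sin.comp (continuous_id.sub continuous_const)).continuousOn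
    have hiA2 : IntervalIntegrable (fun c => cos (Θ c) * sin (c - a)) volume a π := by
      apply ContinuousOn.intervalIntegrable
      rw [Set.uIcc_of_le haπ]
      apply ContinuousOn.mul
      · exact hcosΘ.mono (Set.Icc_subset_Icc ha0 le_rfl)
      · exact (Real.continuous_sin.comp (continuous_id.sub continuous_const)).continuousOn
    calc (∫ c in (0:ℝ)..π, cos (Θ c) * sin (c - a))
        = (∫ c in (0:ℝ)..a, cos (Θ c) * sin (c - a)) +
          ∫ c in a..π, cos (Θ c) * sin (c - a) :=
          (intervalIntegral.integral_add_adjacent_intervals hiA1 hiA2).symm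
      _ = (∫ b in (π - a)..π, -cos (Θ (a + b - π)) * sin b) +
          ∫ b in (0:ℝ)..(π - a), cos (Θ (a + b)) * sin b := by rw [E1, E2]
      _ ≤ (∫ b in (π - a)..π, cos (Θ a + Θ b) * sin b) +
          ∫ b in (0:ℝ)..(π - a), cos (Θ a + Θ b) * sin b := add_le_add I2 I1
      _ = ∫ b in (0:ℝ)..π, cos (Θ a + Θ b) * sin b := by
          rw [add_comm]
          exact intervalIntegral.integral_add_adjacent_intervals hiB1 hiB2
  -- ∫ sin^2 = π/2
  have hs2 : (∫ a in (0:ℝ)..π, sin a * sin a) = π / 2 := by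
    have h1 : EqOn (fun a : ℝ => sin a * sin a) (fun a => sin a ^ 2) (Set.uIcc (0:ℝ) π) := by
      intro a _
      simp only [sq]
    rw [intervalIntegral.integral_congr h1, integral_sin_sq]
    simp
  -- Step 5 : p^2 ≤ K π/2
  have h5 : p * p ≤ K * (π / 2) := by
    have hiL : IntervalIntegrable (fun a => -(K * sin a) * sin a) volume 0 π := by
      apply Continuous.intervalIntegrable
      continuity
    have hiR : IntervalIntegrable (fun a => -(p * sin (Θ a)) * sin a) volume 0 π := by
      apply hInt
      apply ContinuousOn.mul _ Real.continuous_sin.continuousOn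
      exact (continuousOn_const.mul hsinΘ).neg
    have mono := intervalIntegral.integral_mono_on hpi0 hiL hiR (fun a ha =>
      mul_le_mul_of_nonneg_right (hkey a ha)
        (Real.sin_nonneg_of_nonneg_of_le_pi ha.1 ha.2))
    have eL : (∫ a in (0:ℝ)..π, -(K * sin a) * sin a) = -(K * (π / 2)) := by
      have h1 : EqOn (fun a => -(K * sin a) * sin a) (fun a => (-K) * (sin a * sin a))
          (Set.uIcc (0:ℝ) π) := by
        intro a _
        simp only
        ring
      rw [intervalIntegral.integral_congr h1, intervalIntegral.integral_const_mul, hs2]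
      ring
    have eR : (∫ a in (0:ℝ)..π, -(p * sin (Θ a)) * sin a) = -(p * p) := by
      have h1 : EqOn (fun a => -(p * sin (Θ a)) * sin a) (fun a => (-p) * (sin (Θ a) * sin a))
          (Set.uIcc (0:ℝ) π) := by
        intro a _
        simp only
        ring
      rw [intervalIntegral.integral_congr h1, intervalIntegral.integral_const_mul, ← hp_def]
      ring
    rw [eL, eR] at mono
    linarith
  -- Step 6 : K ≤ π - p
  have h6 : K ≤ π - p := by
    have hiR : IntervalIntegrable (fun θ => 1 - sin (Θ θ) * sin θ) volume 0 π :=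
      (intervalIntegrable_const).sub hip
    have mono := intervalIntegral.integral_mono_on hpi0 hiK hiR (fun θ hθ => by
      have h := Real.cos_le_one (Θ θ - θ)
      rw [Real.cos_sub] at h
      linarith)
    have eR : (∫ θ in (0:ℝ)..π, (1 - sin (Θ θ) * sin θ)) = π - p := by
      rw [intervalIntegral.integral_sub intervalIntegrable_const hip, ← hp_def]
      simp
    rw [eR] at mono
    exact mono
  -- Step 7 : π/2 ≤ p  (Jensen with f = -sin)
  have h7 : π / 2 ≤ p := by
    have hconv : ConvexOn ℝ (Set.Icc 0 π) (fun x => -Real.sin x) := by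
      have h := strictConcaveOn_sin_Icc.concaveOn.neg
      simpa [Pi.neg_def] using h
    have hj := hjensen (fun x => -Real.sin x) Real.continuous_sin.neg.continuousOn hconv
    have eL : (∫ θ in (0:ℝ)..π, -Real.sin (Θ θ) * Real.sin θ) = -p := by
      have h1 : EqOn (fun θ => -Real.sin (Θ θ) * Real.sin θ)
          (fun θ => -(Real.sin (Θ θ) * Real.sin θ)) (Set.uIcc (0:ℝ) π) := by
        intro θ _; simp only; ring
      rw [intervalIntegral.integral_congr h1, intervalIntegral.integral_neg, ← hp_def]
    have eR : (∫ θ in (0:ℝ)..π, -Real.sin θ * Real.sin θ) = -(π / 2) := by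
      have h1 : EqOn (fun θ : ℝ => -Real.sin θ * Real.sin θ)
          (fun θ => -(Real.sin θ * Real.sin θ)) (Set.uIcc (0:ℝ) π) := by
        intro θ _; simp only; ring
      rw [intervalIntegral.integral_congr h1, intervalIntegral.integral_neg, hs2]
    rw [eL, eR] at hj
    linarith
  -- Step 8 : p = π/2, K = π/2
  have hp2 : p = π / 2 := by nlinarith [pi_pos]
  have hK2 : K = π / 2 := by nlinarith [pi_pos]
  -- Step 9 : conclude
  have hicos : IntervalIntegrable (fun θ => cos (Θ θ - θ)) volume 0 π := by
    apply hInt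
    exact Real.continuous_cos.comp_continuousOn (hcont.sub continuousOn_id)
  have hfin : (∫ θ in (0:ℝ)..π, (1 - cos (Θ θ - θ))) = 0 := by
    have e1 : (∫ θ in (0:ℝ)..π, cos (Θ θ - θ)) = K + p := by
      have h1 : EqOn (fun θ => cos (Θ θ - θ))
          (fun θ => cos (Θ θ) * cos θ + sin (Θ θ) * sin θ) (Set.uIcc (0:ℝ) π) := by
        intro θ _
        simp only [Real.cos_sub]
      rw [intervalIntegral.integral_congr h1,
        intervalIntegral.integral_add hiK hip, ← hK_def, ← hp_def]
    rw [intervalIntegral.integral_sub intervalIntegrable_const hicos, e1, hp2, hK2]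
    simp
    try ring
  have hzero := zero_of_nonneg_of_integral_zero' (fun θ => 1 - cos (Θ θ - θ))
    ((continuousOn_const).sub (Real.continuous_cos.comp_continuousOn (hcont.sub continuousOn_id)))
    (fun x _ => by linarith [Real.cos_le_one (Θ x - x)]) hfin
  intro θ hθ
  have h9 := hzero θ hθ
  have hc1 : cos (Θ θ - θ) = 1 := by
    linarith
  have hm := hmaps hθ
  have hb1 : -(2 * π) < Θ θ - θ := by
    have := pi_pos
    have h1 := hm.1
    have h2 := hθ.2
    linarith
  have hb2 : Θ θ - θ < 2 * π := by
    have := pi_pos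
    have h1 := hm.2
    have h2 := hθ.1
    linarith
  have := (Real.cos_eq_one_iff_of_lt_of_lt hb1 hb2).1 hc1
  linarith
end
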